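/- arXiv:2201.07553 — 2 statements merged into one kernel-verified Lean document; each statement's English description precedes it below -/
import Mathlib

section
/- Let G be a group of order n and let P be an (n, mk, σ, μ)-partial difference set with σ ≠ μ that is partitioned by a collection S' = {D₁, …, D_m} of m pairwise disjoint k-subsets of G*. Then S' is an (n, m, k, λ)-disjoint difference family if and only if S' is a proper (n, m, k, σ−λ, μ−λ)-external partial difference family. -/
open Finset

section Defs

variable {G : Type*} [AddGroup G] [DecidableEq G]

/-- The multiset of internal differences `x - y` (`x ≠ y`) of a finset. -/
def intDiff (D : Finset G) : Multiset G :=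
  ((D ×ˢ D).filter fun p => p.1 ≠ p.2).val.map fun p => p.1 - p.2

/-- The multiset of external differences `x - y`, `x ∈ D₁`, `y ∈ D₂`. -/
def extDiff (D₁ D₂ : Finset G) : Multiset G :=
  (D₁ ×ˢ D₂).val.map fun p => p.1 - p.2

variable {ι : Type*} [Fintype ι] [DecidableEq ι]

/-- The multiset of all internal differences of a family of sets. -/
def famInt (D : ι → Finset G) : Multiset G := ∑ i, intDiff (D i)

/-- The multiset of all external differences between distinct members of a family of sets. -/
def famExt (D : ι → Finset G) : Multiset G :=
  ∑ i, ∑ j, if j = i then 0 else extDiff (D i) (D j)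

/-- The union of the members of a family of sets. -/
def famU (D : ι → Finset G) : Finset G := Finset.univ.biUnion D

variable [Fintype G]

/-- `D` is an `(n,k,λ)`-difference set: `Δ(D) = λ(G*)`. -/
def IsDS (n k : ℕ) (lam : ℤ) (D : Finset G) : Prop :=
  Fintype.card G = n ∧ D.card = k ∧
    ∀ x : G, ((intDiff D).count x : ℤ) = if x = 0 then 0 else lam

/-- `P` is an `(n,k,λ,μ)`-partial difference set: `Δ(P) = λ(P) + μ(G* \ P)`. -/
def IsPDS (n k : ℕ) (lam mu : ℤ) (P : Finset G) : Prop :=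
  Fintype.card G = n ∧ P.card = k ∧
    ∀ x : G, ((intDiff P).count x : ℤ) =
      if x ∈ P then lam else if x = 0 then 0 else mu

/-- `D` is a family of `m` pairwise disjoint `k`-subsets of a group of order `n`. -/
def FamShape (n m k : ℕ) (D : ι → Finset G) : Prop :=
  Fintype.card G = n ∧ Fintype.card ι = m ∧ (∀ i, (D i).card = k) ∧
    ∀ i j, i ≠ j → Disjoint (D i) (D j)

/-- `(n,m,k,λ)`-disjoint difference family: `⋃ᵢ Δ(Dᵢ) = λ(G*)`. -/
def IsDDF (n m k : ℕ) (lam : ℤ) (D : ι → Finset G) : Prop :=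
  FamShape n m k D ∧
    ∀ x : G, ((famInt D).count x : ℤ) = if x = 0 then 0 else lam

/-- `(n,m,k,λ)`-external difference family: `⋃_{i≠j} Δ(Dᵢ,Dⱼ) = λ(G*)`. -/
def IsEDF (n m k : ℕ) (lam : ℤ) (D : ι → Finset G) : Prop :=
  FamShape n m k D ∧
    ∀ x : G, ((famExt D).count x : ℤ) = if x = 0 then 0 else lam

/-- `(n,m,k,λ,μ)`-disjoint partial difference family:
sets in `G*`, `⋃ᵢ Δ(Dᵢ) = λ(S) + μ(G* \ S)` where `S = ⋃ᵢ Dᵢ`. -/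
def IsDPDF (n m k : ℕ) (lam mu : ℤ) (D : ι → Finset G) : Prop :=
  FamShape n m k D ∧ (∀ i, (0 : G) ∉ D i) ∧
    ∀ x : G, ((famInt D).count x : ℤ) =
      if x ∈ famU D then lam else if x = 0 then 0 else mu

/-- `(n,m,k,λ,μ)`-external partial difference family:
sets in `G*`, `⋃_{i≠j} Δ(Dᵢ,Dⱼ) = λ(S) + μ(G* \ S)` where `S = ⋃ᵢ Dᵢ`. -/
def IsEPDF (n m k : ℕ) (lam mu : ℤ) (D : ι → Finset G) : Prop :=
  FamShape n m k D ∧ (∀ i, (0 : G) ∉ D i) ∧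
    ∀ x : G, ((famExt D).count x : ℤ) =
      if x ∈ famU D then lam else if x = 0 then 0 else mu

end Defs

section FieldDefs

variable {F : Type*} [Field F] [DecidableEq F]

/-- `α` is a primitive element: every nonzero element is a power of `α`. -/
def IsPrimitiveElt (α : F) : Prop := ∀ x : F, x ≠ 0 → ∃ k : ℕ, x = α ^ k

/-- The coset `α^i⟨α^e⟩` of the cyclotomic class of order `e` (of size `f`). -/
def cyclo (α : F) (e f i : ℕ) : Finset F :=
  (Finset.range f).image fun j => α ^ (i + e * j)

/-- The cyclotomic number `(i,j)_e`: the number of pairs `(zᵢ, zⱼ) ∈ Cᵢ × Cⱼ` with `zᵢ + 1 = zⱼ`. -/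
def cycNum (α : F) (e f i j : ℕ) : ℕ :=
  ((cyclo α e f i ×ˢ cyclo α e f j).filter fun p => p.1 + 1 = p.2).card

/-- `Φᵢ = {x ∈ C₀^e : x ≠ 1, x - 1 ∈ α^i C₀^ε}`. -/
def Phi (α : F) (e f ε ρ i : ℕ) : Finset F :=
  (cyclo α e f 0).filter fun x => x ≠ 1 ∧ x - 1 ∈ cyclo α ε ρ i

/-- `φᵢ = |Φᵢ|`. -/
def phi (α : F) (e f ε ρ i : ℕ) : ℕ := (Phi α e f ε ρ i).card

end FieldDefs


section AuxProof

variable {G : Type*} [AddGroup G] [DecidableEq G] {ι : Type*} [Fintype ι] [DecidableEq ι]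

lemma count_intDiff (A : Finset G) (x : G) :
    (intDiff A).count x = ((A ×ˢ A).filter fun p => p.1 ≠ p.2 ∧ x = p.1 - p.2).card := by
  rw [intDiff, Multiset.count_map, ← Finset.filter_val, Finset.filter_filter]
  rfl

lemma count_extDiff (A B : Finset G) (x : G) :
    (extDiff A B).count x = ((A ×ˢ B).filter fun p => x = p.1 - p.2).card := by
  rw [extDiff, Multiset.count_map, ← Finset.filter_val]
  rfl

lemma count_split (D : ι → Finset G) (hdisj : ∀ i j, i ≠ j → Disjoint (D i) (D j)) (x : G) :
    (intDiff (famU D)).count x = (famInt D).count x + (famExt D).count x := by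
  classical
  set Q : G × G → Prop := fun p => p.1 ≠ p.2 ∧ x = p.1 - p.2 with hQ
  have key : ((famU D ×ˢ famU D).filter Q) =
      (Finset.univ : Finset (ι × ι)).biUnion
        (fun ij => (D ij.1 ×ˢ D ij.2).filter Q) := by
    ext p
    simp only [Finset.mem_filter, Finset.mem_product, Finset.mem_biUnion, famU,
      Finset.mem_univ, true_and]
    constructor
    · rintro ⟨⟨h1, h2⟩, hq⟩
      obtain ⟨i, hi⟩ := h1
      obtain ⟨j, hj⟩ := h2
      exact ⟨(i, j), ⟨⟨hi, hj⟩, hq⟩⟩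
    · rintro ⟨⟨i, j⟩, ⟨⟨hi, hj⟩, hq⟩⟩
      exact ⟨⟨⟨i, hi⟩, ⟨j, hj⟩⟩, hq⟩
  have hdisjpair : ∀ ij ∈ (Finset.univ : Finset (ι × ι)), ∀ kl ∈ (Finset.univ : Finset (ι × ι)),
      ij ≠ kl → Disjoint ((D ij.1 ×ˢ D ij.2).filter Q) ((D kl.1 ×ˢ D kl.2).filter Q) := by
    rintro ⟨i, j⟩ - ⟨k, l⟩ - hne
    rw [Finset.disjoint_left]
    rintro ⟨a, b⟩ h1 h2
    simp only [Finset.mem_filter, Finset.mem_product] at h1 h2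
    rcases eq_or_ne i k with rfl | hik
    · rcases eq_or_ne j l with rfl | hjl
      · exact hne rfl
      · exact (hdisj j l hjl).forall_ne_finset h1.1.2 h2.1.2 rfl
    · exact (hdisj i k hik).forall_ne_finset h1.1.1 h2.1.1 rfl
  rw [count_intDiff, key, Finset.card_biUnion hdisjpair, Fintype.sum_prod_type]
  rw [famInt, famExt, Multiset.count_sum', Multiset.count_sum']
  rw [← Finset.sum_add_distrib]
  refine Finset.sum_congr rfl fun i _ => ?_
  rw [Multiset.count_sum']
  have hrhs : ∑ j, Multiset.count x (if j = i then 0 else extDiff (D i) (D j)) =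
      ∑ j ∈ Finset.univ.erase i, (extDiff (D i) (D j)).count x := by
    rw [← Finset.add_sum_erase _ _ (Finset.mem_univ i)]
    rw [if_pos rfl, Multiset.count_zero, zero_add]
    refine Finset.sum_congr rfl fun j hj => ?_
    rw [if_neg (Finset.mem_erase.1 hj).1]
  rw [hrhs, ← Finset.add_sum_erase _ _ (Finset.mem_univ i)]
  congr 1
  · rw [count_intDiff]
  · refine Finset.sum_congr rfl fun j hj => ?_
    rw [count_extDiff]
    congr 1
    apply Finset.filter_congr
    rintro ⟨a, b⟩ hab
    simp only [Finset.mem_product] at hab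
    simp only [hQ]
    have : a ≠ b := (hdisj i j (Ne.symm (Finset.mem_erase.1 hj).1)).forall_ne_finset hab.1 hab.2
    simp [this]

end AuxProof

/-- Theorem: if a proper `(n, m*k, σ, μ)`-PDS is partitioned by a family of `m` pairwise
disjoint `k`-subsets of `G*`, then the family is an `(n,m,k,λ)`-DDF iff it is a proper
`(n,m,k,σ-λ,μ-λ)`-EPDF. -/
theorem pds_partition_ddf_iff_proper_epdf {G : Type*} [AddGroup G] [DecidableEq G] [Fintype G]
    (n m k : ℕ) (sigma mu lam : ℤ) (D : Fin m → Finset G)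
    (hdisj : ∀ i j, i ≠ j → Disjoint (D i) (D j))
    (hcard : ∀ i, (D i).card = k)
    (hzero : ∀ i, (0 : G) ∉ D i)
    (hproper : sigma ≠ mu)
    (hPDS : IsPDS n (m * k) sigma mu (famU D)) :
    IsDDF n m k lam D ↔
      (IsEPDF n m k (sigma - lam) (mu - lam) D ∧ sigma - lam ≠ mu - lam) := by
  classical
  have h0S : (0 : G) ∉ famU D := by
    simp only [famU, Finset.mem_biUnion, Finset.mem_univ, true_and, not_exists]
    exact hzero
  have hsplit : ∀ x : G, ((intDiff (famU D)).count x : ℤ) =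
      ((famInt D).count x : ℤ) + ((famExt D).count x : ℤ) := by
    intro x
    exact_mod_cast congrArg (Nat.cast (R := ℤ)) (count_split D hdisj x)
  have hS := hPDS.2.2
  have shape : FamShape n m k D := ⟨hPDS.1, by simp, hcard, hdisj⟩
  constructor
  · rintro ⟨-, hddf⟩
    have hproper' : sigma - lam ≠ mu - lam := fun h => hproper (by linarith)
    refine ⟨⟨shape, hzero, fun x => ?_⟩, hproper'⟩
    have h1 := hS x
    have h2 := hsplit x
    have h3 := hddf x
    by_cases hx : x ∈ famU D
    · have hx0 : x ≠ 0 := fun h => h0S (h ▸ hx)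
      rw [if_pos hx] at h1
      rw [if_neg hx0] at h3
      rw [if_pos hx]
      linarith
    · rw [if_neg hx] at h1 ⊢
      by_cases h0 : x = 0
      · rw [if_pos h0] at h1 h3 ⊢
        linarith
      · rw [if_neg h0] at h1 h3 ⊢
        linarith
  · rintro ⟨⟨-, -, hepdf⟩, -⟩
    refine ⟨shape, fun x => ?_⟩
    have h1 := hS x
    have h2 := hsplit x
    have h3 := hepdf x
    by_cases hx : x ∈ famU D
    · have hx0 : x ≠ 0 := fun h => h0S (h ▸ hx)
      rw [if_pos hx] at h1 h3
      rw [if_neg hx0]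
      linarith
    · rw [if_neg hx] at h1 h3
      by_cases h0 : x = 0
      · rw [if_pos h0] at h1 h3 ⊢
        linarith
      · rw [if_neg h0] at h1 h3 ⊢
        linarith
end

section
/- Let G be a group of order n and suppose A₁, …, A_m is a partition of G* such that for each 1 ≤ h ≤ ℓ there are exactly c_h of the subsets of cardinality k_h (with m = Σ_h c_h). Then {A₁,…,A_m} is an (n, m; c₁,…,c_ℓ; k₁,…,k_ℓ; λ₁,…,λ_ℓ)-partitioned external difference family if and only if, for every 1 ≤ h ≤ ℓ, the c_h subsets of cardinality k_h form an (n, c_h, k_h, c_h k_h − λ_h − 1, c_h k_h − λ_h)-disjoint partial difference family in G. -/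
open Finset

set_option linter.unusedSectionVars false
section Aux
variable {G : Type*} [AddGroup G] [DecidableEq G]

lemma count_extDiff_s5 (D₁ D₂ : Finset G) (x : G) :
    (extDiff D₁ D₂).count x = (D₁.filter fun a => -x + a ∈ D₂).card := by
  rw [extDiff, Multiset.count_map]
  show ((D₁ ×ˢ D₂).filter fun p => x = p.1 - p.2).card = _
  rw [Finset.card_filter, Finset.sum_product, Finset.card_filter]
  refine Finset.sum_congr rfl fun a _ => ?_
  have : ∀ b : G, (x = a - b) ↔ (b = -x + a) := by
    intro b; constructor
    · rintro rfl; simp [sub_eq_add_neg]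
    · rintro rfl; simp [sub_eq_add_neg]
  simp only [this]
  rw [Finset.sum_ite_eq' D₂ (-x + a) (fun _ => 1)]

lemma count_intDiff_zero (D : Finset G) : (intDiff D).count 0 = 0 := by
  rw [intDiff, Multiset.count_map]
  rw [Multiset.card_eq_zero, Multiset.filter_eq_nil]
  intro p hp h0
  rw [Finset.mem_val, Finset.mem_filter] at hp
  exact hp.2 (by rwa [eq_comm, sub_eq_zero] at h0)

lemma diag_card' (D : Finset G) : ((D ×ˢ D).filter fun p : G × G => p.1 = p.2).card = D.card := by
  rw [Finset.card_filter, Finset.sum_product]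
  have : ∀ a ∈ D, (∑ b ∈ D, if a = b then (1:ℕ) else 0) = 1 := by
    intro a ha
    simp only [eq_comm (a := a)]
    rw [Finset.sum_ite_eq' D a (fun _ => 1), if_pos ha]
  rw [Finset.sum_congr rfl this, Finset.sum_const, smul_eq_mul, mul_one]

lemma count_extDiff_self (D : Finset G) (x : G) :
    (extDiff D D).count x = (intDiff D).count x + if x = 0 then D.card else 0 := by
  rw [extDiff, intDiff, Multiset.count_map, Multiset.count_map]
  show ((D ×ˢ D).filter fun p => x = p.1 - p.2).card
    = (((D ×ˢ D).filter fun p => p.1 ≠ p.2).filter fun p => x = p.1 - p.2).card + _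
  rw [← Finset.card_filter_add_card_filter_not (s := (D ×ˢ D).filter fun p => x = p.1 - p.2)
    (p := fun p => p.1 ≠ p.2)]
  congr 1
  · rw [Finset.filter_filter, Finset.filter_filter]
    exact congrArg Finset.card (Finset.filter_congr fun p _ => by tauto)
  · rw [Finset.filter_filter]
    by_cases hx : x = 0
    · subst hx
      rw [if_pos rfl, ← diag_card' D]
      refine congrArg Finset.card (Finset.filter_congr fun p _ => ?_)
      simp only [not_not]
      exact ⟨fun h => h.2, fun h => ⟨by rw [h, sub_self], h⟩⟩
    · rw [if_neg hx, Finset.card_eq_zero, Finset.filter_eq_empty_iff]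
      rintro p _ ⟨hx2, hpp⟩
      rw [not_not] at hpp
      exact hx (by rw [hx2, hpp, sub_self])
end Aux

section Aux2
variable {G : Type*} [AddGroup G] [DecidableEq G]
variable {ι : Type*} [Fintype ι] [DecidableEq ι] [Fintype G]

lemma sum_indicator_disjoint (A : ι → Finset G)
    (hdisj : ∀ i j, i ≠ j → Disjoint (A i) (A j)) (T : Finset ι) (y : G) :
    (∑ i ∈ T, if y ∈ A i then (1:ℤ) else 0) = if y ∈ T.biUnion A then 1 else 0 := by
  by_cases hy : y ∈ T.biUnion A
  · rw [if_pos hy]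
    obtain ⟨i₀, hi₀T, hi₀⟩ := Finset.mem_biUnion.mp hy
    have : ∀ i ∈ T, (if y ∈ A i then (1:ℤ) else 0) = if i = i₀ then 1 else 0 := by
      intro i _
      by_cases h : i = i₀
      · subst h; rw [if_pos hi₀, if_pos rfl]
      · rw [if_neg h, if_neg fun hyAi => (Finset.disjoint_left.mp (hdisj i i₀ h)) hyAi hi₀]
    rw [Finset.sum_congr rfl this, Finset.sum_ite_eq' T i₀ (fun _ => (1:ℤ)), if_pos hi₀T]
  · rw [if_neg hy]
    refine Finset.sum_eq_zero fun i hi => if_neg fun hyAi => hy (Finset.mem_biUnion.mpr ⟨i, hi, hyAi⟩)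

lemma key_i (A : ι → Finset G)
    (hdisj : ∀ i j, i ≠ j → Disjoint (A i) (A j))
    (hpart : Finset.univ.biUnion A = Finset.univ.erase (0 : G)) (i : ι) (x : G) :
    ((∑ j, if j = i then 0 else extDiff (A i) (A j)).count x : ℤ)
      = ((A i).card : ℤ) - (if x ∈ A i then 1 else 0) - ((intDiff (A i)).count x : ℤ)
        - (if x = 0 then ((A i).card : ℤ) else 0) := by
  have hsplit : ∀ j : ι, ((if j = i then (0 : Multiset G) else extDiff (A i) (A j)).count x : ℤ)
      = ((extDiff (A i) (A j)).count x : ℤ)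
        - (if j = i then ((extDiff (A i) (A i)).count x : ℤ) else 0) := by
    intro j; by_cases h : j = i
    · subst h; simp
    · simp [h]
  have hS : (∑ j, ((extDiff (A i) (A j)).count x : ℤ))
      = ((A i).card : ℤ) - (if x ∈ A i then 1 else 0) := by
    have h1 : ∀ j, ((extDiff (A i) (A j)).count x : ℤ)
        = ∑ a ∈ A i, (if -x + a ∈ A j then (1:ℤ) else 0) := by
      intro j
      rw [count_extDiff_s5, Finset.card_filter]
      push_cast
      exact Finset.sum_congr rfl fun a _ => by split <;> simp
    rw [Finset.sum_congr rfl fun j _ => h1 j, Finset.sum_comm]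
    have h2 : ∀ a ∈ A i, (∑ j : ι, if -x + a ∈ A j then (1:ℤ) else 0)
        = 1 - (if a = x then (1:ℤ) else 0) := by
      intro a _
      rw [sum_indicator_disjoint A hdisj Finset.univ (-x + a), hpart]
      by_cases hax : a = x
      · subst hax
        rw [if_pos rfl, if_neg, sub_self]
        simp [Finset.mem_erase]
      · rw [if_neg hax, if_pos, sub_zero]
        refine Finset.mem_erase.mpr ⟨fun h0 => hax ?_, Finset.mem_univ _⟩
        have := congrArg (x + ·) h0
        simpa using this
    rw [Finset.sum_congr rfl h2, Finset.sum_sub_distrib, Finset.sum_const, Finset.sum_ite_eq' (A i) x (fun _ => (1:ℤ))]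
    simp
  rw [Multiset.count_sum']
  push_cast
  rw [Finset.sum_congr rfl fun j _ => hsplit j, Finset.sum_sub_distrib,
    Finset.sum_ite_eq' Finset.univ i, if_pos (Finset.mem_univ i), hS]
  have := count_extDiff_self (A i) x
  have hc : ((extDiff (A i) (A i)).count x : ℤ)
      = ((intDiff (A i)).count x : ℤ) + (if x = 0 then ((A i).card : ℤ) else 0) := by
    rw [this]; push_cast; split <;> simp
  rw [hc]; ring
end Aux2


/-- Theorem: a partition `A₁,…,A_m` of `G*` with `c h` subsets of cardinality `k h`
(distinct sizes, `m = ∑ c h`) is an `(n,m;c;k;λ)`-PEDF iff for each `h` the subsets of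
cardinality `k h` form an `(n, c h, k h, c h * k h - λ h - 1, c h * k h - λ h)`-DPDF. -/
theorem pedf_iff_dpdf_partition {G : Type*} [AddGroup G] [DecidableEq G] [Fintype G]
    (n m L : ℕ) (A : Fin m → Finset G) (c k : Fin L → ℕ) (lam : Fin L → ℤ)
    (hn : Fintype.card G = n)
    (hdisj : ∀ i j, i ≠ j → Disjoint (A i) (A j))
    (hpart : famU A = Finset.univ.erase (0 : G))
    (hkinj : Function.Injective k)
    (hall : ∀ i, ∃ h, (A i).card = k h)
    (hc : ∀ h, (Finset.univ.filter fun i => (A i).card = k h).card = c h)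
    (hm : m = ∑ h, c h) :
    ((∀ h, ∀ x : G,
        (((∑ i ∈ Finset.univ.filter (fun i => (A i).card = k h),
            ∑ j, if j = i then 0 else extDiff (A i) (A j)).count x : ℤ))
          = if x = 0 then 0 else lam h)
      ↔
     (∀ h, ∀ x : G,
        (((∑ i ∈ Finset.univ.filter (fun i => (A i).card = k h),
            intDiff (A i)).count x : ℤ))
          = if x ∈ (Finset.univ.filter (fun i => (A i).card = k h)).biUnion A
            then (c h : ℤ) * (k h : ℤ) - lam h - 1
            else if x = 0 then 0 else (c h : ℤ) * (k h : ℤ) - lam h)) := by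
  classical
  have hpart' : Finset.univ.biUnion A = Finset.univ.erase (0 : G) := hpart
  have hkey : ∀ (h : Fin L) (x : G),
      ((∑ i ∈ Finset.univ.filter (fun i => (A i).card = k h),
          ∑ j, if j = i then 0 else extDiff (A i) (A j)).count x : ℤ)
        = (c h : ℤ) * (k h : ℤ)
          - (if x ∈ (Finset.univ.filter (fun i => (A i).card = k h)).biUnion A then 1 else 0)
          - ((∑ i ∈ Finset.univ.filter (fun i => (A i).card = k h), intDiff (A i)).count x : ℤ)
          - (if x = 0 then (c h : ℤ) * (k h : ℤ) else 0) := by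
    intro h x
    set T := Finset.univ.filter (fun i => (A i).card = k h) with hT
    have hcards : ∑ i ∈ T, ((A i).card : ℤ) = (c h : ℤ) * (k h : ℤ) := by
      have h1 : ∀ i ∈ T, ((A i).card : ℤ) = (k h : ℤ) := fun i hi => by
        rw [(Finset.mem_filter.mp hi).2]
      rw [Finset.sum_congr rfl h1, Finset.sum_const, show T.card = c h from hc h,
        nsmul_eq_mul]
    have hlast : ∑ i ∈ T, (if x = 0 then ((A i).card : ℤ) else 0)
        = if x = 0 then (c h : ℤ) * (k h : ℤ) else 0 := by
      by_cases hx : x = 0 <;> simp [hx, hcards]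
    rw [Multiset.count_sum']
    push_cast
    rw [Finset.sum_congr rfl (fun i _ => key_i A hdisj hpart' i x),
      Finset.sum_sub_distrib, Finset.sum_sub_distrib, Finset.sum_sub_distrib,
      hcards, sum_indicator_disjoint A hdisj T x, hlast, Multiset.count_sum']
    push_cast
    ring
  have hI0 : ∀ h : Fin L,
      ((∑ i ∈ Finset.univ.filter (fun i => (A i).card = k h), intDiff (A i)).count (0:G) : ℤ)
        = 0 := by
    intro h
    rw [Multiset.count_sum']
    simp [count_intDiff_zero]
  have hS0 : ∀ h : Fin L,
      (0 : G) ∉ (Finset.univ.filter (fun i => (A i).card = k h)).biUnion A := by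
    intro h h0
    obtain ⟨i, _, h0i⟩ := Finset.mem_biUnion.mp h0
    have : (0:G) ∈ Finset.univ.biUnion A :=
      Finset.mem_biUnion.mpr ⟨i, Finset.mem_univ i, h0i⟩
    rw [hpart'] at this
    exact (Finset.mem_erase.mp this).1 rfl
  constructor
  · intro H h x
    have hk := hkey h x
    by_cases hx : x = 0
    · subst hx
      rw [if_neg (hS0 h), if_pos rfl]
      exact hI0 h
    · have H' := H h x
      rw [if_neg hx] at H'
      rw [if_neg hx] at hk
      by_cases hxS : x ∈ (Finset.univ.filter (fun i => (A i).card = k h)).biUnion A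
      · rw [if_pos hxS] at hk ⊢; linarith
      · rw [if_neg hxS] at hk
        rw [if_neg hxS, if_neg hx]
        linarith
  · intro H h x
    have hk := hkey h x
    by_cases hx : x = 0
    · subst hx
      rw [if_pos rfl]
      rw [if_pos rfl, if_neg (hS0 h), hI0 h] at hk
      linarith
    · have H' := H h x
      rw [if_neg hx] at hk ⊢
      by_cases hxS : x ∈ (Finset.univ.filter (fun i => (A i).card = k h)).biUnion A
      · rw [if_pos hxS] at H' hk; linarith
      · rw [if_neg hxS, if_neg hx] at H'
        rw [if_neg hxS] at hk
        linarith
end
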